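/- For all d ≥ 2 there exists a constant α_d > 0 such that for every integer μ ≥ 1, the number of primitive vectors v ∈ {0,…,μ}^d that are orthogonal to some nonzero lattice vector w ∈ ℤ^d with |w| ≤ α_d·μ^{1/d} is at most half the total number of primitive vectors in {0,…,μ}^d. -/

import Mathlib

set_option maxHeartbeats 1600000

lemma sum_inv_sq_aux (n : ℕ) (hn : 2 ≤ n) :
    ∑ g ∈ Finset.Icc 2 n, (1:ℝ)/(g:ℝ)^2 ≤ 3/4 - 1/n := by
  induction n, hn using Nat.le_induction with
  | base => norm_num
  | succ n hn ih =>
    rw [Finset.sum_Icc_succ_top (by omega)]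
    have h1 : (0:ℝ) < n := by positivity
    have h2 : (0:ℝ) < (n:ℝ) + 1 := by positivity
    have key : (1:ℝ)/((n:ℝ)+1)^2 ≤ 1/n - 1/(n+1) := by
      rw [div_sub_div _ _ (ne_of_gt h1) (ne_of_gt h2)]
      rw [div_le_div_iff₀ (by positivity) (by positivity)]
      nlinarith
    push_cast
    linarith

lemma sum_inv_sq (n : ℕ) : ∑ g ∈ Finset.Icc 2 n, (1:ℝ)/(g:ℝ)^2 ≤ 3/4 := by
  rcases le_or_gt 2 n with h | h
  · have h1 := sum_inv_sq_aux n h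
    have h2 : (0:ℝ) < 1/(n:ℝ) := by
      have : (0:ℝ) < n := by positivity
      positivity
    linarith
  · interval_cases n <;> norm_num

lemma orth_card' (d μ : ℕ) (w : Fin d → ℤ) (hw : w ≠ 0) :
    ((Fintype.piFinset fun _ : Fin d => Finset.Icc (0:ℤ) μ).filter
      (fun v => ∑ i, w i * v i = 0)).card ≤ (μ+1)^(d-1) := by
  obtain ⟨i0, hi0⟩ : ∃ i, w i ≠ 0 := Function.ne_iff.mp hw
  have hcard : (Fintype.piFinset fun i : Fin d =>
      if i = i0 then ({0} : Finset ℤ) else Finset.Icc (0:ℤ) μ).card = (μ+1)^(d-1) := by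
    rw [Fintype.card_piFinset]
    rw [← Finset.mul_prod_erase Finset.univ _ (Finset.mem_univ i0)]
    rw [if_pos rfl, Finset.card_singleton, one_mul]
    rw [Finset.prod_congr rfl (fun i hi => ?_), Finset.prod_const]
    · rw [Finset.card_erase_of_mem (Finset.mem_univ i0), Finset.card_univ, Fintype.card_fin]
    · rw [if_neg (Finset.ne_of_mem_erase hi), Int.card_Icc]
      simp
  rw [← hcard]
  apply Finset.card_le_card_of_injOn (fun v => Function.update v i0 0)
  · intro v hv
    simp only [Finset.mem_coe, Finset.mem_filter, Fintype.mem_piFinset] at hv ⊢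
    intro i
    by_cases h : i = i0
    · subst h; simp
    · rw [Function.update_of_ne h, if_neg h]
      exact hv.1 i
  · intro v hv v' hv' heq
    simp only [Finset.coe_filter, Set.mem_setOf_eq, Fintype.mem_piFinset] at hv hv'
    have hne : ∀ i, i ≠ i0 → v i = v' i := by
      intro i hi
      have := congrFun heq i
      simpa [Function.update_of_ne hi] using this
    have hmain : v i0 = v' i0 := by
      have e1 : ∑ i, w i * v i = w i0 * v i0 + ∑ i ∈ Finset.univ.erase i0, w i * v i :=
        (Finset.add_sum_erase _ (fun i => w i * v i) (Finset.mem_univ i0)).symm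
      have e2 : ∑ i, w i * v' i = w i0 * v' i0 + ∑ i ∈ Finset.univ.erase i0, w i * v' i :=
        (Finset.add_sum_erase _ (fun i => w i * v' i) (Finset.mem_univ i0)).symm
      have e3 : ∑ i ∈ Finset.univ.erase i0, w i * v i
          = ∑ i ∈ Finset.univ.erase i0, w i * v' i := by
        apply Finset.sum_congr rfl
        intro i hi
        rw [hne i (Finset.ne_of_mem_erase hi)]
      have := hv.2
      have := hv'.2
      have : w i0 * v i0 = w i0 * v' i0 := by omega
      exact mul_left_cancel₀ hi0 this
    funext i
    by_cases h : i = i0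
    · rw [h]; exact hmain
    · exact hne i h

lemma coprime_pairs_lower' (μ : ℕ) (hμ : 1 ≤ μ) :
    (μ:ℝ)^2/4 ≤ (((Finset.Icc (1:ℤ) μ ×ˢ Finset.Icc (1:ℤ) μ).filter
      (fun p => Int.gcd p.1 p.2 = 1)).card : ℝ) := by
  set Tot := Finset.Icc (1:ℤ) μ ×ˢ Finset.Icc (1:ℤ) μ with hTot
  have htot : Tot.card = μ^2 := by
    rw [Finset.card_product, Int.card_Icc]
    simp [sq]
  -- bad set bound
  have hsplit := Finset.card_filter_add_card_filter_not
    (s := Tot) (p := fun p => Int.gcd p.1 p.2 = 1)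
  set Bad := Tot.filter (fun p => ¬ Int.gcd p.1 p.2 = 1) with hBad
  have hbadsub : Bad ⊆ (Finset.Icc 2 μ).biUnion
      (fun g : ℕ => Tot.filter (fun p => (g:ℤ) ∣ p.1 ∧ (g:ℤ) ∣ p.2)) := by
    intro p hp
    simp only [hBad, Finset.mem_filter] at hp
    obtain ⟨hpT, hg⟩ := hp
    have hmem := hpT
    simp only [hTot, Finset.mem_product, Finset.mem_Icc] at hmem
    set g := Int.gcd p.1 p.2 with hgdef
    have hd1 : (g:ℤ) ∣ p.1 := Int.gcd_dvd_left _ _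
    have hd2 : (g:ℤ) ∣ p.2 := Int.gcd_dvd_right _ _
    have hgle : (g:ℤ) ≤ p.1 := Int.le_of_dvd (by omega) hd1
    have hgpos : g ≠ 0 := by
      intro h
      rw [hgdef] at h
      have := Int.gcd_eq_zero_iff.mp h
      omega
    rw [Finset.mem_biUnion]
    refine ⟨g, ?_, ?_⟩
    · rw [Finset.mem_Icc]
      constructor
      · omega
      · have : (g:ℤ) ≤ (μ:ℤ) := le_trans hgle hmem.1.2
        exact_mod_cast this
    · rw [Finset.mem_filter]
      exact ⟨hpT, hd1, hd2⟩
  have hterm : ∀ g : ℕ, g ∈ Finset.Icc 2 μ →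
      ((Tot.filter (fun p => (g:ℤ) ∣ p.1 ∧ (g:ℤ) ∣ p.2)).card : ℝ) ≤ (μ:ℝ)^2/(g:ℝ)^2 := by
    intro g hg
    rw [Finset.mem_Icc] at hg
    have hg0 : (0:ℤ) < g := by exact_mod_cast (by omega : 0 < g)
    have hcardle : (Tot.filter (fun p => (g:ℤ) ∣ p.1 ∧ (g:ℤ) ∣ p.2)).card
        ≤ (Finset.Icc (1:ℤ) ((μ:ℤ)/g) ×ˢ Finset.Icc (1:ℤ) ((μ:ℤ)/g)).card := by
      apply Finset.card_le_card_of_injOn (fun p : ℤ × ℤ => (p.1 / (g:ℤ), p.2 / (g:ℤ)))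
      · intro p hp
        simp only [Finset.mem_coe, Finset.mem_filter, hTot, Finset.mem_product, Finset.mem_Icc] at hp
        obtain ⟨⟨⟨h11, h12⟩, h21, h22⟩, hdvd1, hdvd2⟩ := hp
        simp only [Finset.mem_coe, Finset.mem_product, Finset.mem_Icc]
        have e1 : (g:ℤ) * (p.1 / g) = p.1 := Int.mul_ediv_cancel' hdvd1
        have e2 : (g:ℤ) * (p.2 / g) = p.2 := Int.mul_ediv_cancel' hdvd2
        constructor
        · constructor
          · nlinarith [Int.ediv_nonneg (le_of_lt (lt_of_lt_of_le zero_lt_one h11)) (le_of_lt hg0)]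
          · exact Int.ediv_le_ediv hg0 h12
        · constructor
          · nlinarith [Int.ediv_nonneg (le_of_lt (lt_of_lt_of_le zero_lt_one h21)) (le_of_lt hg0)]
          · exact Int.ediv_le_ediv hg0 h22
      · intro p hp q hq heq
        simp only [Finset.coe_filter, Set.mem_setOf_eq] at hp hq
        have e1 : (g:ℤ) * (p.1 / g) = p.1 := Int.mul_ediv_cancel' hp.2.1
        have e2 : (g:ℤ) * (p.2 / g) = p.2 := Int.mul_ediv_cancel' hp.2.2
        have f1 : (g:ℤ) * (q.1 / g) = q.1 := Int.mul_ediv_cancel' hq.2.1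
        have f2 : (g:ℤ) * (q.2 / g) = q.2 := Int.mul_ediv_cancel' hq.2.2
        have hfst : p.1/(g:ℤ) = q.1/(g:ℤ) := congrArg Prod.fst heq
        have hsnd : p.2/(g:ℤ) = q.2/(g:ℤ) := congrArg Prod.snd heq
        have hp1 : p.1 = q.1 := by rw [← e1, ← f1, hfst]
        have hp2 : p.2 = q.2 := by rw [← e2, ← f2, hsnd]
        exact Prod.ext hp1 hp2
    have hic : ((Finset.Icc (1:ℤ) ((μ:ℤ)/g)).card : ℝ) ≤ (μ:ℝ)/g := by
      rw [Int.card_Icc]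
      have hnn : 0 ≤ (μ:ℤ)/g := Int.ediv_nonneg (by positivity) (le_of_lt hg0)
      have : (((μ:ℤ)/g + 1 - 1).toNat : ℤ) = (μ:ℤ)/g := by omega
      have h2 : (((μ:ℤ)/g + 1 - 1).toNat : ℝ) = (((μ:ℤ)/g : ℤ) : ℝ) := by exact_mod_cast this
      rw [h2]
      have hgR : (0:ℝ) < (g:ℝ) := by exact_mod_cast hg0
      rw [le_div_iff₀ hgR]
      have h3 : ((μ:ℤ)/g) * g ≤ (μ:ℤ) := Int.ediv_mul_le (μ:ℤ) (ne_of_gt hg0)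
      exact_mod_cast h3
    calc ((Tot.filter (fun p => (g:ℤ) ∣ p.1 ∧ (g:ℤ) ∣ p.2)).card : ℝ)
        ≤ ((Finset.Icc (1:ℤ) ((μ:ℤ)/g) ×ˢ Finset.Icc (1:ℤ) ((μ:ℤ)/g)).card : ℝ) := by
          exact_mod_cast hcardle
      _ = ((Finset.Icc (1:ℤ) ((μ:ℤ)/g)).card : ℝ)^2 := by
          rw [Finset.card_product]; push_cast; ring
      _ ≤ ((μ:ℝ)/g)^2 := by
          apply pow_le_pow_left₀ (by positivity) hic
      _ = (μ:ℝ)^2/(g:ℝ)^2 := by ring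
  have hbad : ((Bad.card : ℝ)) ≤ (3/4) * (μ:ℝ)^2 := by
    calc (Bad.card : ℝ) ≤ (((Finset.Icc 2 μ).biUnion
        (fun g : ℕ => Tot.filter (fun p => (g:ℤ) ∣ p.1 ∧ (g:ℤ) ∣ p.2))).card : ℝ) := by
          exact_mod_cast Finset.card_le_card hbadsub
      _ ≤ ∑ g ∈ Finset.Icc 2 μ, ((Tot.filter (fun p => (g:ℤ) ∣ p.1 ∧ (g:ℤ) ∣ p.2)).card : ℝ) := by
          exact_mod_cast Finset.card_biUnion_le
      _ ≤ ∑ g ∈ Finset.Icc 2 μ, (μ:ℝ)^2/(g:ℝ)^2 := Finset.sum_le_sum hterm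
      _ = (μ:ℝ)^2 * ∑ g ∈ Finset.Icc 2 μ, (1:ℝ)/(g:ℝ)^2 := by
          rw [Finset.mul_sum]; apply Finset.sum_congr rfl; intros; ring
      _ ≤ (μ:ℝ)^2 * (3/4) := by
          apply mul_le_mul_of_nonneg_left (sum_inv_sq μ) (by positivity)
      _ = (3/4) * (μ:ℝ)^2 := by ring
  have hgood : ((Tot.filter (fun p => Int.gcd p.1 p.2 = 1)).card : ℝ)
      = (μ:ℝ)^2 - (Bad.card : ℝ) := by
    have h1 : (Tot.filter (fun p => Int.gcd p.1 p.2 = 1)).card + Bad.card = μ^2 := by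
      rw [hsplit]; exact htot
    have h2 : ((Tot.filter (fun p => Int.gcd p.1 p.2 = 1)).card : ℝ) + (Bad.card : ℝ)
        = (μ:ℝ)^2 := by exact_mod_cast h1
    linarith
  rw [hgood]
  linarith

lemma T_lower' (d μ : ℕ) (hd : 2 ≤ d) :
    ((Finset.Icc (1:ℤ) μ ×ˢ Finset.Icc (1:ℤ) μ).filter
      (fun p => Int.gcd p.1 p.2 = 1)).card * (μ+1)^(d-2)
    ≤ ((Fintype.piFinset fun _ : Fin d => Finset.Icc (0:ℤ) μ).filter
      (fun v => Finset.univ.gcd v = 1)).card := by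
  set Pairs := (Finset.Icc (1:ℤ) μ ×ˢ Finset.Icc (1:ℤ) μ).filter
      (fun p => Int.gcd p.1 p.2 = 1) with hPairs
  set Rest := Fintype.piFinset fun _ : Fin (d-2) => Finset.Icc (0:ℤ) μ with hRest
  have hrc : Rest.card = (μ+1)^(d-2) := by
    rw [hRest, Fintype.card_piFinset]
    rw [Finset.prod_const, Finset.card_univ, Fintype.card_fin, Int.card_Icc]
    norm_num
  rw [← hrc, ← Finset.card_product]
  apply Finset.card_le_card_of_injOn
    (fun q : (ℤ × ℤ) × (Fin (d-2) → ℤ) => fun i : Fin d =>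
      if h : 2 ≤ (i:ℕ) then q.2 ⟨(i:ℕ) - 2, by omega⟩
      else if (i:ℕ) = 0 then q.1.1 else q.1.2)
  · intro q hq
    simp only [Finset.mem_coe, Finset.mem_product, hPairs, Finset.mem_filter, Finset.mem_Icc,
      Fintype.mem_piFinset, hRest] at hq
    obtain ⟨⟨⟨⟨h11, h12⟩, h21, h22⟩, hcop⟩, hrest⟩ := hq
    simp only [Finset.mem_coe, Finset.mem_filter, Fintype.mem_piFinset, Finset.mem_Icc]
    constructor
    · intro i
      by_cases h : 2 ≤ (i:ℕ)
      · rw [dif_pos h]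
        exact hrest ⟨(i:ℕ) - 2, by omega⟩
      · rw [dif_neg h]
        by_cases h0 : (i:ℕ) = 0
        · rw [if_pos h0]; omega
        · rw [if_neg h0]; omega
    · -- gcd = 1
      set v := fun i : Fin d =>
        if h : 2 ≤ (i:ℕ) then q.2 ⟨(i:ℕ) - 2, by omega⟩
        else if (i:ℕ) = 0 then q.1.1 else q.1.2 with hv
    
      have hv0 : v ⟨0, by omega⟩ = q.1.1 := by simp [hv]
      have hv1 : v ⟨1, by omega⟩ = q.1.2 := by simp [hv]
      set G := Finset.univ.gcd v with hG
      have hd1 : G ∣ q.1.1 := hv0 ▸ Finset.gcd_dvd (Finset.mem_univ _)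
      have hd2 : G ∣ q.1.2 := hv1 ▸ Finset.gcd_dvd (Finset.mem_univ _)
      have hdg : G ∣ (Int.gcd q.1.1 q.1.2 : ℤ) := Int.dvd_coe_gcd hd1 hd2
      rw [hcop] at hdg
      norm_num at hdg
      rcases Int.isUnit_iff.mp (isUnit_of_dvd_one hdg) with h | h
      · exact h
      · exfalso
        have hnorm : normalize G = G := Finset.normalize_gcd
        rw [h, ← Int.abs_eq_normalize] at hnorm
        norm_num at hnorm
  · intro q hq q' hq' heq
    clear hq hq'
    have heq2 : (fun i : Fin d =>
        if h : 2 ≤ (i:ℕ) then q.2 ⟨(i:ℕ) - 2, by omega⟩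
        else if (i:ℕ) = 0 then q.1.1 else q.1.2)
      = (fun i : Fin d =>
        if h : 2 ≤ (i:ℕ) then q'.2 ⟨(i:ℕ) - 2, by omega⟩
        else if (i:ℕ) = 0 then q'.1.1 else q'.1.2) := heq
    clear heq
    have h0 : q.1.1 = q'.1.1 := by
      have := congrFun heq2 ⟨0, by omega⟩
      simpa using this
    have h1 : q.1.2 = q'.1.2 := by
      have := congrFun heq2 ⟨1, by omega⟩
      simpa using this
    have h2 : q.2 = q'.2 := by
      funext j
      have hj := congrFun heq2 ⟨(j:ℕ) + 2, by omega⟩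
      rw [dif_pos (by simp), dif_pos (by simp)] at hj
      have hidx : (⟨(j:ℕ) + 2 - 2, by omega⟩ : Fin (d-2)) = j := by
        apply Fin.ext
        simp
      rw [hidx] at hj
      exact hj
    exact Prod.ext (Prod.ext h0 h1) h2

/-- For `d ≥ 2` there is `α_d > 0` such that for every `μ ≥ 1`, the number of
primitive vectors in `{0,…,μ}^d` orthogonal to some nonzero lattice vector of norm at most
`α_d · μ^(1/d)` is at most half of all primitive vectors in `{0,…,μ}^d`. -/
theorem stmt8 (d : ℕ) (hd : 2 ≤ d) :
    ∃ α : ℝ, 0 < α ∧ ∀ μ : ℕ, 1 ≤ μ →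
      2 * ({v : Fin d → ℤ | (∀ i, 0 ≤ v i ∧ v i ≤ (μ : ℤ)) ∧ Finset.univ.gcd v = 1 ∧
              ∃ w : Fin d → ℤ, w ≠ 0 ∧ (∑ i, w i * v i = 0) ∧
                Real.sqrt (∑ i, ((w i : ℝ)) ^ 2) ≤ α * (μ : ℝ) ^ ((1 : ℝ) / d)}).ncard
        ≤ ({v : Fin d → ℤ | (∀ i, 0 ≤ v i ∧ v i ≤ (μ : ℤ)) ∧
              Finset.univ.gcd v = 1}).ncard := by
  classical
  refine ⟨(48:ℝ)⁻¹, by norm_num, ?_⟩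
  intro μ hμ
  have hd0 : (d:ℝ) ≠ 0 := by positivity
  set R : ℝ := (48:ℝ)⁻¹ * (μ:ℝ) ^ ((1:ℝ)/d) with hR
  set Bfin := Fintype.piFinset fun _ : Fin d => Finset.Icc (0:ℤ) (μ:ℤ) with hBfin
  set Tfin := Bfin.filter (fun v => Finset.univ.gcd v = 1) with hTfin
  set P : (Fin d → ℤ) → Prop := fun v => ∃ w : Fin d → ℤ, w ≠ 0 ∧ (∑ i, w i * v i = 0) ∧
      Real.sqrt (∑ i, ((w i : ℝ)) ^ 2) ≤ R with hP
  set Sfin := Tfin.filter P with hSfin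
  have hT : {v : Fin d → ℤ | (∀ i, 0 ≤ v i ∧ v i ≤ (μ : ℤ)) ∧
      Finset.univ.gcd v = 1} = ↑Tfin := by
    ext v
    simp [hTfin, hBfin, Fintype.mem_piFinset, Finset.mem_Icc]
  have hS : {v : Fin d → ℤ | (∀ i, 0 ≤ v i ∧ v i ≤ (μ : ℤ)) ∧ Finset.univ.gcd v = 1 ∧
      ∃ w : Fin d → ℤ, w ≠ 0 ∧ (∑ i, w i * v i = 0) ∧
        Real.sqrt (∑ i, ((w i : ℝ)) ^ 2) ≤ (48:ℝ)⁻¹ * (μ : ℝ) ^ ((1 : ℝ) / d)}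
      = ↑Sfin := by
    ext v
    simp only [hSfin, hTfin, hBfin, hP, Finset.coe_filter, Set.mem_setOf_eq,
      Finset.mem_filter, Fintype.mem_piFinset, Finset.mem_Icc, ← hR]
    tauto
  rw [hS, hT, Set.ncard_coe_finset, Set.ncard_coe_finset]
  -- square norm facts
  have sqrt_le_imp : ∀ w : Fin d → ℤ, Real.sqrt (∑ i, ((w i : ℝ)) ^ 2) ≤ R →
      ∀ i, ((w i : ℝ))^2 ≤ R^2 := by
    intro w hle i
    have hnn : (0:ℝ) ≤ ∑ i, ((w i : ℝ)) ^ 2 := by positivity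
    have h1 : ((w i : ℝ))^2 ≤ ∑ i, ((w i : ℝ)) ^ 2 :=
      Finset.single_le_sum (f := fun j => ((w j : ℝ))^2)
        (fun j _ => by positivity) (Finset.mem_univ i)
    have h2 : ∑ i, ((w i : ℝ)) ^ 2 ≤ R^2 := by
      have := Real.sq_sqrt hnn
      nlinarith [Real.sqrt_nonneg (∑ i, ((w i : ℝ)) ^ 2)]
    linarith
  by_cases hbig : 48^d ≤ μ
  · -- large case
    have hR1 : 1 ≤ R := by
      have h48 : ((48:ℝ))^(d:ℕ) ≤ (μ:ℝ) := by exact_mod_cast hbig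
      have : ((48:ℝ)^(d:ℕ)) ^ ((1:ℝ)/d) ≤ (μ:ℝ) ^ ((1:ℝ)/d) :=
        Real.rpow_le_rpow (by positivity) h48 (by positivity)
      have he : ((48:ℝ)^(d:ℕ)) ^ ((1:ℝ)/d) = 48 := by
        rw [← Real.rpow_natCast (48:ℝ) d, ← Real.rpow_mul (by norm_num)]
        rw [mul_one_div, div_self hd0, Real.rpow_one]
      rw [he] at this
      rw [hR]
      linarith
    set M : ℤ := ⌊R⌋ with hM
    have hM1 : 1 ≤ M := by
      rw [hM, Int.le_floor]; exact_mod_cast hR1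
    have hMR : (M:ℝ) ≤ R := Int.floor_le R
    set Wfin := (Fintype.piFinset fun _ : Fin d => Finset.Icc (-M) M).erase 0 with hWfin
    have hsub : Sfin ⊆ Wfin.biUnion (fun w => Bfin.filter (fun v => ∑ i, w i * v i = 0)) := by
      intro v hv
      rw [hSfin, Finset.mem_filter] at hv
      obtain ⟨hvT, w, hw0, hsum, hnorm⟩ := hv
      rw [Finset.mem_biUnion]
      refine ⟨w, ?_, ?_⟩
      · rw [hWfin, Finset.mem_erase]
        refine ⟨hw0, ?_⟩
        rw [Fintype.mem_piFinset]
        intro i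
        rw [Finset.mem_Icc]
        have hsq := sqrt_le_imp w hnorm i
        have habs : |(w i : ℝ)| ≤ R := by
          rw [← Real.sqrt_sq_eq_abs]
          calc Real.sqrt ((w i:ℝ)^2) ≤ Real.sqrt (R^2) := Real.sqrt_le_sqrt hsq
            _ = R := Real.sqrt_sq (by linarith)
        rw [abs_le] at habs
        rw [hM]
        constructor
        · rw [neg_le]
          exact Int.le_floor.mpr (by push_cast; linarith [habs.1])
        · exact Int.le_floor.mpr habs.2
      · rw [Finset.mem_filter]
        refine ⟨?_, hsum⟩
        rw [hTfin, Finset.mem_filter] at hvT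
        exact hvT.1
    have hWcard : Wfin.card ≤ ((2*M+1).toNat)^d := by
      calc Wfin.card ≤ (Fintype.piFinset fun _ : Fin d => Finset.Icc (-M) M).card :=
            Finset.card_le_card (Finset.erase_subset _ _)
        _ = ((2*M+1).toNat)^d := by
            rw [Fintype.card_piFinset, Finset.prod_const, Finset.card_univ, Fintype.card_fin,
              Int.card_Icc]
            congr 2
            omega
    have hScard : Sfin.card ≤ ((2*M+1).toNat)^d * (μ+1)^(d-1) := by
      calc Sfin.card ≤ (Wfin.biUnion (fun w => Bfin.filter (fun v => ∑ i, w i * v i = 0))).card :=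
            Finset.card_le_card hsub
        _ ≤ ∑ w ∈ Wfin, (Bfin.filter (fun v => ∑ i, w i * v i = 0)).card :=
            Finset.card_biUnion_le
        _ ≤ Wfin.card * (μ+1)^(d-1) := by
            apply Finset.sum_le_card_nsmul
            intro w hw
            have hw0 : w ≠ 0 := by
              rw [hWfin, Finset.mem_erase] at hw
              exact hw.1
            exact orth_card' d μ w hw0
        _ ≤ ((2*M+1).toNat)^d * (μ+1)^(d-1) := Nat.mul_le_mul_right _ hWcard
    have hTcard := T_lower' d μ hd
    have hPc := coprime_pairs_lower' μ hμ
    -- to reals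
    rw [← Nat.cast_le (α := ℝ)]
    push_cast
    have hμ1 : (1:ℝ) ≤ (μ:ℝ) := by exact_mod_cast hμ
    have hpow : (((μ:ℝ)) ^ ((1:ℝ)/d))^(d:ℕ) = (μ:ℝ) := by
      rw [← Real.rpow_natCast ((μ:ℝ) ^ ((1:ℝ)/d)) d, ← Real.rpow_mul (by positivity)]
      rw [one_div_mul_cancel hd0, Real.rpow_one]
    have h2M : (((2*M+1).toNat : ℕ) : ℝ) = 2*(M:ℝ)+1 := by
      have : ((2*M+1).toNat : ℤ) = 2*M+1 := Int.toNat_of_nonneg (by omega)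
      exact_mod_cast this
    have hSR : (Sfin.card : ℝ) ≤ (3*R)^d * ((μ:ℝ)+1)^(d-1) := by
      calc (Sfin.card : ℝ) ≤ (((2*M+1).toNat)^d * (μ+1)^(d-1) : ℕ) := by exact_mod_cast hScard
        _ = (((2*M+1).toNat : ℕ):ℝ)^d * ((μ:ℝ)+1)^(d-1) := by push_cast; ring
        _ ≤ (3*R)^d * ((μ:ℝ)+1)^(d-1) := by
            apply mul_le_mul_of_nonneg_right _ (by positivity)
            apply pow_le_pow_left₀ (by rw [h2M]; positivity)
            rw [h2M]; linarith
    have hTR : ((μ:ℝ)^2/4) * ((μ:ℝ)+1)^(d-2) ≤ (Tfin.card : ℝ) := by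
      calc ((μ:ℝ)^2/4) * ((μ:ℝ)+1)^(d-2)
          ≤ ((((Finset.Icc (1:ℤ) μ ×ˢ Finset.Icc (1:ℤ) μ).filter
              (fun p => Int.gcd p.1 p.2 = 1)).card : ℝ)) * ((μ:ℝ)+1)^(d-2) := by
            apply mul_le_mul_of_nonneg_right hPc (by positivity)
        _ = ((((Finset.Icc (1:ℤ) μ ×ˢ Finset.Icc (1:ℤ) μ).filter
              (fun p => Int.gcd p.1 p.2 = 1)).card * (μ+1)^(d-2) : ℕ) : ℝ) := by
            push_cast; ring
        _ ≤ (Tfin.card : ℝ) := by exact_mod_cast hTcard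
    have hmid : 2 * ((3*R)^d * ((μ:ℝ)+1)^(d-1)) ≤ ((μ:ℝ)^2/4) * ((μ:ℝ)+1)^(d-2) := by
      have h3R : (3*R)^d = ((16:ℝ)⁻¹)^d * (μ:ℝ) := by
        have e : (3:ℝ) * R = (16:ℝ)⁻¹ * ((μ:ℝ) ^ ((1:ℝ)/d)) := by
          rw [hR]; ring
        rw [e, mul_pow, hpow]
      have h16 : ((16:ℝ)⁻¹)^d ≤ (16:ℝ)⁻¹ := by
        calc ((16:ℝ)⁻¹)^d ≤ ((16:ℝ)⁻¹)^1 :=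
              pow_le_pow_of_le_one (by norm_num) (by norm_num) (by omega)
          _ = (16:ℝ)⁻¹ := pow_one _
      have hsplit : ((μ:ℝ)+1)^(d-1) = ((μ:ℝ)+1)^(d-2) * ((μ:ℝ)+1) := by
        rw [← pow_succ]
        congr 1
        omega
      rw [h3R, hsplit]
      have hpnn : (0:ℝ) ≤ ((μ:ℝ)+1)^(d-2) := by positivity
      have hle2 : ((μ:ℝ)+1) ≤ 2*(μ:ℝ) := by linarith
      calc 2 * (((16:ℝ)⁻¹)^d * (μ:ℝ) * (((μ:ℝ)+1)^(d-2) * ((μ:ℝ)+1)))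
          ≤ 2 * ((16:ℝ)⁻¹ * (μ:ℝ) * (((μ:ℝ)+1)^(d-2) * (2*(μ:ℝ)))) := by
            have hA : ((16:ℝ)⁻¹)^d * (μ:ℝ) ≤ (16:ℝ)⁻¹ * (μ:ℝ) :=
              mul_le_mul_of_nonneg_right h16 (by positivity)
            have hB : (((μ:ℝ)+1)^(d-2) * ((μ:ℝ)+1)) ≤ (((μ:ℝ)+1)^(d-2) * (2*(μ:ℝ))) :=
              mul_le_mul_of_nonneg_left hle2 hpnn
            have hApos : (0:ℝ) ≤ ((16:ℝ)⁻¹)^d * (μ:ℝ) := by positivity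
            have hBpos : (0:ℝ) ≤ (((μ:ℝ)+1)^(d-2) * ((μ:ℝ)+1)) := by positivity
            nlinarith
        _ = ((μ:ℝ)^2/4) * ((μ:ℝ)+1)^(d-2) := by ring
    calc 2 * (Sfin.card:ℝ) ≤ 2 * ((3*R)^d * ((μ:ℝ)+1)^(d-1)) := by linarith
      _ ≤ ((μ:ℝ)^2/4) * ((μ:ℝ)+1)^(d-2) := hmid
      _ ≤ (Tfin.card : ℝ) := hTR
  · -- small case : Sfin is empty
    have hRlt : R < 1 := by
      push_neg at hbig
      have hcast : (μ:ℝ) < ((48:ℝ))^(d:ℕ) := by exact_mod_cast hbig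
      have hlt : (μ:ℝ) ^ ((1:ℝ)/d) < (((48:ℝ))^(d:ℕ)) ^ ((1:ℝ)/d) := by
        apply Real.rpow_lt_rpow (by positivity) hcast (by positivity)
      have he : ((48:ℝ)^(d:ℕ)) ^ ((1:ℝ)/d) = 48 := by
        rw [← Real.rpow_natCast (48:ℝ) d, ← Real.rpow_mul (by norm_num)]
        rw [mul_one_div, div_self hd0, Real.rpow_one]
      rw [he] at hlt
      rw [hR]
      nlinarith [Real.rpow_nonneg (Nat.cast_nonneg μ) ((1:ℝ)/d)]
    have hempty : Sfin = ∅ := by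
      rw [Finset.eq_empty_iff_forall_notMem]
      intro v hv
      rw [hSfin, Finset.mem_filter] at hv
      obtain ⟨-, w, hw0, -, hnorm⟩ := hv
      obtain ⟨i, hi⟩ := Function.ne_iff.mp hw0
      have hi' : w i ≠ 0 := by simpa using hi
      have h1 : (1:ℝ) ≤ ((w i : ℝ))^2 := by
        have : w i ≤ -1 ∨ 1 ≤ w i := by omega
        have h2 : 1 ≤ (w i)^2 := by rcases this with h | h <;> nlinarith
        exact_mod_cast h2
      have h2 : (1:ℝ) ≤ ∑ j, ((w j : ℝ)) ^ 2 := by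
        calc (1:ℝ) ≤ ((w i : ℝ))^2 := h1
          _ ≤ ∑ j, ((w j : ℝ)) ^ 2 :=
            Finset.single_le_sum (f := fun j => ((w j : ℝ))^2)
              (fun j _ => by positivity) (Finset.mem_univ i)
      have h3 : (1:ℝ) ≤ Real.sqrt (∑ j, ((w j : ℝ)) ^ 2) := by
        rw [show (1:ℝ) = Real.sqrt 1 by simp]
        exact Real.sqrt_le_sqrt h2
      linarith
    rw [hempty]
    simp
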